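/- The number of r-tuples of monic polynomials of degree n over the finite field F_q whose gcd is 1 equals q^{rn} - q^{r(n-1)+1}, where r ≥ 2 and n ≥ 1. -/

import Mathlib

open Polynomial


section Aux
variable {F : Type*} [Field F] [Fintype F] [DecidableEq F]

abbrev MonicN (F : Type*) [Field F] (n : ℕ) := {p : Polynomial F // p.Monic ∧ p.natDegree = n}
abbrev TupN (F : Type*) [Field F] (r n : ℕ) :=
  {v : Fin r → Polynomial F // ∀ i, (v i).Monic ∧ (v i).natDegree = n}
abbrev CopN (F : Type*) [Field F] (r n : ℕ) :=
  {v : Fin r → Polynomial F //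
    (∀ i, (v i).Monic ∧ (v i).natDegree = n) ∧ Ideal.span (Set.range v) = ⊤}

noncomputable def monicEquiv (n : ℕ) : MonicN F n ≃ (Polynomial.degreeLT F n) where
  toFun p := ⟨p.1 - X ^ n, by
    obtain ⟨p, hm, hd⟩ := p
    rw [Polynomial.mem_degreeLT]
    have h1 : p.degree = (X ^ n : Polynomial F).degree := by
      rw [degree_X_pow, Polynomial.degree_eq_natDegree hm.ne_zero, hd]
    have := Polynomial.degree_sub_lt h1 hm.ne_zero
      (by simp [hm.leadingCoeff, (monic_X_pow n (R := F)).leadingCoeff])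
    rwa [Polynomial.degree_eq_natDegree hm.ne_zero, hd] at this⟩
  invFun f := ⟨X ^ n + f.1, by
    have hf : (f.1).degree < (n : WithBot ℕ) := Polynomial.mem_degreeLT.1 f.2
    refine ⟨Polynomial.monic_X_pow_add hf, ?_⟩
    have : (X ^ n + f.1 : Polynomial F).degree = (X ^ n : Polynomial F).degree := by
      apply Polynomial.degree_add_eq_left_of_degree_lt
      rwa [degree_X_pow]
    rw [degree_X_pow] at this
    exact Polynomial.natDegree_eq_of_degree_eq_some this⟩
  left_inv p := Subtype.ext (by ring)
  right_inv f := Subtype.ext (by ring)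

instance (n : ℕ) : Finite (MonicN F n) :=
  Finite.of_equiv _ ((monicEquiv n).trans (Polynomial.degreeLTEquiv F n).toEquiv).symm

lemma card_MonicN (n : ℕ) : Nat.card (MonicN F n) = Fintype.card F ^ n := by
  rw [Nat.card_congr ((monicEquiv n).trans (Polynomial.degreeLTEquiv F n).toEquiv)]
  simp [Nat.card_eq_fintype_card]

noncomputable def tupEquiv (r n : ℕ) : TupN F r n ≃ (Fin r → MonicN F n) :=
  Equiv.subtypePiEquivPi (β := fun _ => Polynomial F) (p := fun _ b => b.Monic ∧ b.natDegree = n)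

instance (r n : ℕ) : Finite (TupN F r n) := Finite.of_equiv _ (tupEquiv r n).symm

instance (r n : ℕ) : Finite (CopN F r n) :=
  Finite.of_injective (fun v => (⟨v.1, v.2.1⟩ : TupN F r n))
    (by intro a b h; exact Subtype.ext (by simpa using congrArg Subtype.val h))

lemma card_TupN (r n : ℕ) : Nat.card (TupN F r n) = Fintype.card F ^ (n * r) := by
  rw [Nat.card_congr (tupEquiv r n), Nat.card_pi]
  simp [card_MonicN, pow_mul]

lemma span_image_gcd {ι : Type*} (s : Finset ι) (v : ι → Polynomial F) :
    Ideal.span (v '' ↑s) = Ideal.span {s.gcd v} := by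
  classical
  induction s using Finset.induction_on with
  | empty => simp [Ideal.span_singleton_eq_bot.2 rfl]
  | insert _ _ ha ih =>
    rw [Finset.gcd_insert, span_gcd, Ideal.span_insert, ← ih, ← Ideal.span_insert,
      Finset.coe_insert, Set.image_insert_eq]

lemma span_range_gcd {r : ℕ} (v : Fin r → Polynomial F) :
    Ideal.span (Set.range v) = Ideal.span {Finset.univ.gcd v} := by
  rw [← Set.image_univ, ← Finset.coe_univ, span_image_gcd]

lemma gcd_eq_one_iff {r : ℕ} (v : Fin r → Polynomial F) :
    Finset.univ.gcd v = 1 ↔ Ideal.span (Set.range v) = ⊤ := by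
  rw [span_range_gcd, Ideal.span_singleton_eq_top]
  constructor
  · rintro h; rw [h]; exact isUnit_one
  · intro h
    rw [← Finset.normalize_gcd, normalize_eq_one]
    exact h

noncomputable def mulMap (r n : ℕ) :
    (Σ k : Fin (n + 1), MonicN F (k : ℕ) × CopN F r (n - (k : ℕ))) → TupN F r n :=
  fun x => ⟨fun i => x.2.1.1 * x.2.2.1 i, fun i => by
    obtain ⟨⟨k, hk⟩, ⟨d, hd⟩, ⟨w, hw⟩⟩ := x
    refine ⟨hd.1.mul (hw.1 i).1, ?_⟩
    rw [hd.1.natDegree_mul (hw.1 i).1, hd.2, (hw.1 i).2]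
    simp only []
    omega⟩

lemma mulMap_bij (r n : ℕ) (hr : 1 ≤ r) : Function.Bijective (mulMap (F := F) r n) := by
  constructor
  · rintro ⟨⟨k, hk⟩, ⟨d, hd⟩, ⟨w, hw⟩⟩ ⟨⟨k', hk'⟩, ⟨d', hd'⟩, ⟨w', hw'⟩⟩ h
    have hfun : (fun i => d * w i) = fun i => d' * w' i := by
      simpa [mulMap] using congrArg Subtype.val h
    have hgcd : Finset.univ.gcd (fun i => d * w i) = d := by
      rw [Finset.gcd_mul_left, (gcd_eq_one_iff w).2 hw.2, hd.1.normalize_eq_self, mul_one]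
    have hgcd' : Finset.univ.gcd (fun i => d' * w' i) = d' := by
      rw [Finset.gcd_mul_left, (gcd_eq_one_iff w').2 hw'.2, hd'.1.normalize_eq_self, mul_one]
    have hdd : d = d' := by rw [← hgcd, hfun, hgcd']
    obtain rfl : k = k' := by
      have hv2 : (⟨k, hk⟩ : Fin (n + 1)).val = (⟨k', hk'⟩ : Fin (n + 1)).val := by
        rw [← hd.2, ← hd'.2, hdd]
      exact hv2
    obtain rfl : d = d' := hdd
    obtain rfl : w = w' := funext fun i => mul_left_cancel₀ hd.1.ne_zero (congrFun hfun i)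
    rfl
  · rintro ⟨v, hv⟩
    have i₀ : Fin r := ⟨0, hr⟩
    set g := Finset.univ.gcd v with hg
    have hv0 : v i₀ ≠ 0 := (hv i₀).1.ne_zero
    have hg0 : g ≠ 0 := fun h0 => hv0 (Finset.gcd_eq_zero_iff.1 h0 i₀ (Finset.mem_univ _))
    have hgm : g.Monic := by
      have := Polynomial.monic_normalize (p := g) hg0
      rwa [hg, Finset.normalize_gcd] at this
    have hdvd : ∀ i, g ∣ v i := fun i => Finset.gcd_dvd (Finset.mem_univ i)
    have hkn : g.natDegree ≤ n := by
      have := Polynomial.natDegree_le_of_dvd (hdvd i₀) hv0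
      rwa [(hv i₀).2] at this
    set w : Fin r → Polynomial F := fun i => v i / g with hwdef
    have hvi : ∀ i, v i = g * w i := fun i => (EuclideanDomain.mul_div_cancel' hg0 (hdvd i)).symm
    have hwm : ∀ i, (w i).Monic := by
      intro i
      have h1 : (v i).leadingCoeff = g.leadingCoeff * (w i).leadingCoeff := by
        rw [← Polynomial.leadingCoeff_mul, ← hvi i]
      rw [(hv i).1.leadingCoeff, hgm.leadingCoeff, one_mul] at h1
      exact h1.symm
    have hwd : ∀ i, (w i).natDegree = n - g.natDegree := by
      intro i
      have h2 : (v i).natDegree = g.natDegree + (w i).natDegree := by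
        rw [hvi i]; exact hgm.natDegree_mul (hwm i)
      have h3 := (hv i).2
      omega
    have hwgcd : Finset.univ.gcd w = 1 := by
      have hthis : Finset.univ.gcd v = normalize g * Finset.univ.gcd w := by
        conv_lhs => rw [show v = fun i => g * w i from funext hvi]
        exact Finset.gcd_mul_left
      rw [hgm.normalize_eq_self, ← hg] at hthis
      exact (mul_left_cancel₀ hg0 (by rw [← hthis, mul_one])).symm
    refine ⟨⟨⟨g.natDegree, by omega⟩, ⟨g, hgm, rfl⟩,
      ⟨w, ⟨fun i => ⟨hwm i, hwd i⟩, (gcd_eq_one_iff w).1 hwgcd⟩⟩⟩, ?_⟩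
    exact Subtype.ext (funext fun i => (hvi i).symm)

lemma count_key (r n : ℕ) (hr : 1 ≤ r) :
    Fintype.card F ^ (n * r) =
      ∑ k ∈ Finset.range (n + 1), Fintype.card F ^ k * Nat.card (CopN F r (n - k)) := by
  have h1 : Nat.card (TupN F r n)
      = Nat.card (Σ k : Fin (n + 1), MonicN F (k : ℕ) × CopN F r (n - (k : ℕ))) :=
    (Nat.card_congr (Equiv.ofBijective _ (mulMap_bij r n hr))).symm
  rw [card_TupN] at h1
  rw [h1]
  letI : ∀ k : Fin (n + 1), Fintype (MonicN F (k : ℕ) × CopN F r (n - (k : ℕ))) :=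
    fun _ => Fintype.ofFinite _
  rw [Nat.card_eq_fintype_card, Fintype.card_sigma,
    ← Fin.sum_univ_eq_sum_range (fun k => Fintype.card F ^ k * Nat.card (CopN F r (n - k))) (n + 1)]
  refine Finset.sum_congr rfl fun k _ => ?_
  rw [← Nat.card_eq_fintype_card, Nat.card_prod, card_MonicN]

end Aux

/-- The number of r-tuples of monic polynomials of degree n over F_q
whose gcd is 1 (equivalently, which generate the unit ideal) equals
q^{rn} - q^{r(n-1)+1}. -/
theorem stmt_0 (F : Type*) [Field F] [Fintype F] (q : ℕ) (hq : q = Fintype.card F)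
    (r n : ℕ) (hr : 2 ≤ r) (hn : 1 ≤ n) :
    Nat.card {v : Fin r → Polynomial F //
        (∀ i, (v i).Monic ∧ (v i).natDegree = n) ∧
        Ideal.span (Set.range v) = ⊤} =
      q ^ (r * n) - q ^ (r * (n - 1) + 1) := by
  subst hq
  letI : DecidableEq F := Classical.decEq F
  obtain ⟨m, rfl⟩ : ∃ m, n = m + 1 := ⟨n - 1, by omega⟩
  have h1 := count_key (F := F) r (m + 1) (by omega)
  have h2 := count_key (F := F) r m (by omega)
  rw [Finset.sum_range_succ'] at h1
  simp only [pow_zero, one_mul, Nat.sub_zero] at h1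
  have hsum : ∑ k ∈ Finset.range (m + 1),
        Fintype.card F ^ (k + 1) * Nat.card (CopN F r (m + 1 - (k + 1)))
      = Fintype.card F * Fintype.card F ^ (m * r) := by
    rw [h2, Finset.mul_sum]
    refine Finset.sum_congr rfl fun k _ => ?_
    rw [Nat.succ_sub_succ, pow_succ]
    ring
  rw [hsum] at h1
  have hq1 : Fintype.card F * Fintype.card F ^ (m * r) = Fintype.card F ^ (r * m + 1) := by
    rw [pow_succ, mul_comm m r, mul_comm]
  show Nat.card (CopN F r (m + 1)) = _
  have hmain : Nat.card (CopN F r (m + 1))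
      = Fintype.card F ^ ((m + 1) * r) - Fintype.card F ^ (r * m + 1) := by omega
  rw [hmain, mul_comm (m + 1) r]
  simp
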